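/- The d-grid is O_HD: Let d ≥ 1. Every harmonic function u on the d-grid of finite energy is constant. -/

import Mathlib

open scoped ENNReal
open Filter

variable {V : Type*}

/-- A *flow* on a graph: an antisymmetric function on ordered pairs of vertices
that vanishes on non-adjacent pairs. -/
def IsFlow (G : SimpleGraph V) (θ : V → V → ℝ) : Prop :=
  (∀ u v, θ u v = -θ v u) ∧ ∀ u v, ¬G.Adj u v → θ u v = 0

/-- The divergence (source strength) of a flow at a vertex. -/
noncomputable def divg (G : SimpleGraph V) [G.LocallyFinite] (θ : V → V → ℝ) (v : V) : ℝ :=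
  ∑ u ∈ G.neighborFinset v, θ v u

/-- The energy `(1/2) ∑ r(u,v) θ(u,v)²` dissipated by a flow, valued in `[0,∞]`. -/
noncomputable def energy (r θ : V → V → ℝ) : ℝ≥0∞ :=
  2⁻¹ * ∑' p : V × V, ENNReal.ofReal (r p.1 p.2 * θ p.1 p.2 ^ 2)

open Classical in
/-- The source distribution with a unit source at `p` and a unit sink at `q`. -/
noncomputable def pointSource (p q v : V) : ℝ :=
  if v = p then 1 else if v = q then -1 else 0

/-- The odd resistance: the infimum of the energy over all finite-energy unit
flows from `p` to `q`. -/
noncomputable def oddRes (G : SimpleGraph V) [G.LocallyFinite] (r : V → V → ℝ)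
    (p q : V) : ℝ≥0∞ :=
  ⨅ (θ : V → V → ℝ) (_ : IsFlow G θ ∧ energy r θ ≠ ⊤ ∧ divg G θ = pointSource p q),
    energy r θ

/-- The cut resistance: the infimum of the energy over all unit flows from `p` to `q`
vanishing on every edge with an endpoint outside `S`. -/
noncomputable def cutRes (G : SimpleGraph V) [G.LocallyFinite] (r : V → V → ℝ)
    (p q : V) (S : Finset V) : ℝ≥0∞ :=
  ⨅ (θ : V → V → ℝ) (_ : IsFlow G θ ∧ divg G θ = pointSource p q ∧
      ∀ u v, (u ∉ S ∨ v ∉ S) → θ u v = 0), energy r θ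

/-- The even resistance: the infimum of the cut resistances over all finite
vertex sets containing `p` and `q`. -/
noncomputable def evenRes (G : SimpleGraph V) [G.LocallyFinite] (r : V → V → ℝ)
    (p q : V) : ℝ≥0∞ :=
  ⨅ (S : Finset V) (_ : p ∈ S ∧ q ∈ S), cutRes G r p q S

/-- The short resistance: the infimum of the energy over all antisymmetric edge
functions supported on edges with at least one endpoint in `S` whose divergence
at every vertex of `S` is that of a unit flow from `p` to `q`. -/
noncomputable def shortRes (G : SimpleGraph V) [G.LocallyFinite] (r : V → V → ℝ)
    (p q : V) (S : Finset V) : ℝ≥0∞ :=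
  ⨅ (θ : V → V → ℝ) (_ : (∀ u v, θ u v = -θ v u) ∧ (∀ u v, ¬G.Adj u v → θ u v = 0) ∧
      (∀ u v, u ∉ S → v ∉ S → θ u v = 0) ∧
      ∀ v ∈ S, divg G θ v = pointSource p q v), energy r θ

/-- A function on the vertices of a network is harmonic if the net current it
induces out of each vertex is zero. -/
def Harmonic (G : SimpleGraph V) [G.LocallyFinite] (r : V → V → ℝ) (u : V → ℝ) : Prop :=
  ∀ v, ∑ w ∈ G.neighborFinset v, (u v - u w) / r v w = 0

open Classical in
/-- The Dirichlet energy `(1/2) ∑ (u(v)-u(w))²/r(v,w)` of a function on the vertices. -/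
noncomputable def fnEnergy (G : SimpleGraph V) (r : V → V → ℝ) (u : V → ℝ) : ℝ≥0∞ :=
  2⁻¹ * ∑' p : V × V,
    if G.Adj p.1 p.2 then ENNReal.ofReal ((u p.1 - u p.2) ^ 2 / r p.1 p.2) else 0

/-- The `d`-grid: vertices are the points of `ℤ^d`, with an edge between two points at
`ℓ¹`-distance `1`. -/
def gridGraph (d : ℕ) : SimpleGraph (Fin d → ℤ) where
  Adj p q := ∑ i, |p i - q i| = 1
  symm := by
    constructor
    intro p q h
    rw [← h]
    exact Finset.sum_congr rfl fun i _ => abs_sub_comm (q i) (p i)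
  loopless := by
    constructor
    intro p h
    simp only [sub_self, abs_zero, Finset.sum_const_zero] at h
    exact absurd h (by norm_num)

noncomputable instance gridGraph.locallyFinite (d : ℕ) : (gridGraph d).LocallyFinite := by
  intro v
  apply Set.Finite.fintype
  have hsub : (gridGraph d).neighborSet v ⊆
      Set.pi Set.univ fun i => Set.Icc (v i - 1) (v i + 1) := by
    intro w hw
    have hsum : ∑ i, |v i - w i| = 1 := hw
    rw [Set.mem_pi]
    intro i _
    have hle : |v i - w i| ≤ 1 := by
      calc |v i - w i| ≤ ∑ j, |v j - w j| :=
            Finset.single_le_sum (f := fun j => |v j - w j|) (fun j _ => abs_nonneg _) (Finset.mem_univ i)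
        _ = 1 := hsum
    obtain ⟨h1, h2⟩ := abs_le.mp hle
    exact ⟨by linarith, by linarith⟩
  exact (Set.Finite.pi fun i => Set.finite_Icc _ _).subset hsub

section Aux
variable {d : ℕ}

lemma grid_adj_iff {p q : Fin d → ℤ} : (gridGraph d).Adj p q ↔ ∑ i, |p i - q i| = 1 := Iff.rfl

lemma grid_adj_translate (t : Fin d → ℤ) {v w : Fin d → ℤ} :
    (gridGraph d).Adj (v + t) (w + t) ↔ (gridGraph d).Adj v w := by
  simp only [grid_adj_iff, Pi.add_apply]
  constructor <;> intro h <;> [skip; skip] <;>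
    · rw [← h]; exact Finset.sum_congr rfl fun i _ => by ring_nf

lemma grid_adj_single (v : Fin d → ℤ) (i : Fin d) {c : ℤ} (hc : |c| = 1) :
    (gridGraph d).Adj v (v + Pi.single i c) := by
  rw [grid_adj_iff]
  have : ∀ j, |v j - (v + (Pi.single i c : Fin d → ℤ)) j| = if j = i then |c| else 0 := by
    intro j
    by_cases hj : j = i <;> simp [Pi.single_apply, hj, abs_neg]
  rw [Finset.sum_congr rfl fun j _ => this j]
  simp [hc]

lemma grid_nbhd_translate (v t : Fin d → ℤ) :
    (gridGraph d).neighborFinset (v + t) =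
      ((gridGraph d).neighborFinset v).map (addRightEmbedding t) := by
  ext w
  simp only [SimpleGraph.mem_neighborFinset, Finset.mem_map, addRightEmbedding_apply]
  constructor
  · intro h
    refine ⟨w - t, ?_, by abel⟩
    have := (grid_adj_translate t (v := v) (w := w - t)).mpr
    have h2 : w - t + t = w := by abel
    rw [← h2] at h
    exact (grid_adj_translate t).mp h
  · rintro ⟨x, hx, rfl⟩
    exact (grid_adj_translate t).mpr hx

lemma grid_step_all {g : (Fin d → ℤ) → ℝ}
    (h : ∀ (v : Fin d → ℤ) (i : Fin d), g (v + Pi.single i 1) = g v) :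
    ∀ (n : ℤ) (v : Fin d → ℤ) (i : Fin d), g (v + Pi.single i n) = g v := by
  intro n
  induction n using Int.induction_on with
  | zero => simp
  | succ k ih =>
    intro v i
    have he : v + Pi.single i ((k : ℤ) + 1) = (v + Pi.single i (k : ℤ)) + Pi.single i 1 := by
      rw [Pi.single_add, add_assoc]
    rw [he, h, ih]
  | pred k ih =>
    intro v i
    have he : (v + Pi.single i (-(k : ℤ) - 1)) + Pi.single i 1 = v + Pi.single i (-(k : ℤ)) := by
      rw [add_assoc, ← Pi.single_add]
      norm_num
    calc g (v + Pi.single i (-(k : ℤ) - 1))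
        = g ((v + Pi.single i (-(k : ℤ) - 1)) + Pi.single i 1) := (h _ i).symm
      _ = g (v + Pi.single i (-(k : ℤ))) := by rw [he]
      _ = g v := ih v i

lemma grid_const_of_step {g : (Fin d → ℤ) → ℝ}
    (h : ∀ (v : Fin d → ℤ) (i : Fin d), g (v + Pi.single i 1) = g v) :
    ∀ v w, g v = g w := by
  have hall := grid_step_all h
  have hz : ∀ (S : Finset (Fin d)) (v z : Fin d → ℤ),
      g (v + ∑ i ∈ S, Pi.single i (z i)) = g v := by
    intro S
    induction S using Finset.induction_on with
    | empty => simp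
    | insert _ _ ha ih =>
      intro v z
      rw [Finset.sum_insert ha, ← add_assoc, ih, hall]
  intro v w
  have h2 := hz Finset.univ v (w - v)
  rw [Finset.univ_sum_single (w - v)] at h2
  have h3 : v + (w - v) = w := by abel
  rw [h3] at h2
  exact h2.symm
end Aux

open Classical in
lemma grid_l2_adj_const {d : ℕ} {f : (Fin d → ℤ) → ℝ}
    (hf : ∀ v, ∑ w ∈ (gridGraph d).neighborFinset v, (f v - f w) = 0)
    (hsq : Summable fun v => f v ^ 2) :
    ∀ v w, (gridGraph d).Adj v w → f v = f w := by
  classical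
  set G := gridGraph d with hG
  set c : ℕ := (G.neighborFinset 0).card with hc
  have hcard : ∀ v, (G.neighborFinset v).card = c := by
    intro v
    have h0 : G.neighborFinset (0 + v) = (G.neighborFinset 0).map (addRightEmbedding v) :=
      grid_nbhd_translate 0 v
    rw [zero_add] at h0
    rw [h0, Finset.card_map]
  set F2a : ((Fin d → ℤ) × (Fin d → ℤ)) → ℝ :=
    fun p => if G.Adj p.1 p.2 then f p.1 ^ 2 else 0 with hF2adef
  have hF2a_nonneg : ∀ p, 0 ≤ F2a p := by
    intro p; simp only [hF2adef]; split <;> positivity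
  have hzero : ∀ (g : (Fin d → ℤ) → ℝ) (v : Fin d → ℤ),
      ∀ w ∉ G.neighborFinset v, (if G.Adj v w then g w else 0) = 0 := by
    intro g v w hw
    rw [SimpleGraph.mem_neighborFinset] at hw
    simp [hw]
  have hinner_summable : ∀ (g : (Fin d → ℤ) → ℝ) (v : Fin d → ℤ),
      Summable (fun w => if G.Adj v w then g w else 0) :=
    fun g v => summable_of_ne_finset_zero (hzero g v)
  have hF2a : Summable F2a := by
    rw [summable_prod_of_nonneg hF2a_nonneg]
    refine ⟨fun v => hinner_summable _ v, ?_⟩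
    have heq : (fun v => ∑' w, F2a (v, w)) = fun v => (c : ℝ) * f v ^ 2 := by
      funext v
      have hterm : ∀ w ∈ G.neighborFinset v, F2a (v, w) = f v ^ 2 :=
        fun w hw => if_pos ((SimpleGraph.mem_neighborFinset _ _ _).mp hw)
      rw [tsum_eq_sum (s := G.neighborFinset v) (hzero _ v), Finset.sum_congr rfl hterm,
        Finset.sum_const, hcard v, nsmul_eq_mul]
    rw [heq]
    exact hsq.mul_left _
  have hF2b : Summable (fun p : (Fin d → ℤ) × (Fin d → ℤ) => F2a p.swap) := hF2a.prod_symm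
  set H : ((Fin d → ℤ) × (Fin d → ℤ)) → ℝ :=
    fun p => if G.Adj p.1 p.2 then f p.1 * (f p.1 - f p.2) else 0 with hHdef
  have hHswap : ∀ p : (Fin d → ℤ) × (Fin d → ℤ),
      H p.swap = if G.Adj p.1 p.2 then f p.2 * (f p.2 - f p.1) else 0 := by
    intro p
    simp only [hHdef, Prod.fst_swap, Prod.snd_swap]
    rw [G.adj_comm]
  have hF2aswap : ∀ p : (Fin d → ℤ) × (Fin d → ℤ),
      F2a p.swap = if G.Adj p.1 p.2 then f p.2 ^ 2 else 0 := by
    intro p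
    simp only [hF2adef, Prod.fst_swap, Prod.snd_swap]
    rw [G.adj_comm]
  have hbound : ∀ p, |H p| ≤ 2 * (F2a p + F2a p.swap) := by
    intro p
    rw [hF2aswap]
    simp only [hHdef, hF2adef]
    by_cases h : G.Adj p.1 p.2
    · simp only [h, if_true]
      rw [abs_le]
      constructor <;> nlinarith [sq_nonneg (f p.1 + f p.2), sq_nonneg (f p.1 - f p.2),
        sq_nonneg (f p.1), sq_nonneg (f p.2)]
    · simp [h]
  have hH : Summable H := by
    rw [← summable_abs_iff]
    exact Summable.of_nonneg_of_le (fun p => abs_nonneg _) hbound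
      (((hF2a.add hF2b).mul_left 2))
  have hHinner : ∀ v, Summable (fun w => H (v, w)) := fun v => hinner_summable _ v
  have htsumH : ∑' p, H p = 0 := by
    rw [Summable.tsum_prod' hH hHinner]
    have : ∀ v : Fin d → ℤ, ∑' w, H (v, w) = 0 := by
      intro v
      have hterm : ∀ w ∈ G.neighborFinset v, H (v, w) = f v * (f v - f w) :=
        fun w hw => if_pos ((SimpleGraph.mem_neighborFinset _ _ _).mp hw)
      rw [tsum_eq_sum (s := G.neighborFinset v) (hzero _ v), Finset.sum_congr rfl hterm,
        ← Finset.mul_sum, hf v, mul_zero]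
    rw [tsum_congr this, tsum_zero]
  have hH' : Summable (fun p : (Fin d → ℤ) × (Fin d → ℤ) => H p.swap) := hH.prod_symm
  have htsumH' : ∑' p : (Fin d → ℤ) × (Fin d → ℤ), H p.swap = 0 := by
    have h1 := (Equiv.prodComm (Fin d → ℤ) (Fin d → ℤ)).tsum_eq H
    simp only [Equiv.prodComm_apply] at h1
    rw [h1, htsumH]
  set D : ((Fin d → ℤ) × (Fin d → ℤ)) → ℝ :=
    fun p => if G.Adj p.1 p.2 then (f p.1 - f p.2) ^ 2 else 0 with hDdef
  have hD : ∀ p, D p = H p + H p.swap := by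
    intro p
    rw [hHswap]
    simp only [hDdef, hHdef]
    by_cases h : G.Adj p.1 p.2
    · simp only [h, if_true]; ring
    · simp [h]
  have hDsummable : Summable D := by
    rw [funext hD]; exact hH.add hH'
  have htsumD : ∑' p, D p = 0 := by
    rw [funext hD, Summable.tsum_add hH hH', htsumH, htsumH', add_zero]
  intro v w hvw
  have hle : D (v, w) ≤ ∑' p, D p := by
    apply Summable.le_tsum hDsummable
    intro j _
    simp only [hDdef]; split <;> positivity
  rw [htsumD] at hle
  have : (f v - f w) ^ 2 ≤ 0 := by
    simpa [hDdef, hvw] using hle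
  have h0 : (f v - f w) ^ 2 = 0 := le_antisymm this (sq_nonneg _)
  have := pow_eq_zero_iff (n := 2) (by norm_num) |>.mp h0
  linarith [this]

/-- **The `d`-grid is `O_HD`**: every finite-energy harmonic function on the `d`-grid
is constant. -/
theorem grid_OHD (d : ℕ) (hd : 1 ≤ d) (u : (Fin d → ℤ) → ℝ)
    (hharm : Harmonic (gridGraph d) (fun _ _ => 1) u)
    (hfin : fnEnergy (gridGraph d) (fun _ _ => 1) u ≠ ⊤) :
    ∀ v w, u v = u w := by
  classical
  haveI : Nonempty (Fin d) := ⟨⟨0, hd⟩⟩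
  haveI : Infinite (Fin d → ℤ) := by infer_instance
  set G := gridGraph d with hG
  have hh : ∀ v, ∑ w ∈ G.neighborFinset v, (u v - u w) = 0 := by
    intro v
    have := hharm v
    simpa using this
  unfold fnEnergy at hfin
  have hT : (∑' p : (Fin d → ℤ) × (Fin d → ℤ),
      if G.Adj p.1 p.2 then ENNReal.ofReal ((u p.1 - u p.2) ^ 2 / 1) else 0) ≠ ⊤ := by
    intro h
    apply hfin
    rw [h, ENNReal.mul_top (by norm_num)]
  have key : ∀ (v0 : Fin d → ℤ) (i : Fin d), u (v0 + Pi.single i 1) = u v0 := by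
    intro v0 i
    set e : Fin d → ℤ := Pi.single i 1 with he
    set f : (Fin d → ℤ) → ℝ := fun v => u (v + e) - u v with hfdef
    have hadj : ∀ v : Fin d → ℤ, G.Adj v (v + e) :=
      fun v => grid_adj_single v i (by norm_num)
    have hinj : Function.Injective (fun v : Fin d → ℤ => (v, v + e)) := by
      intro a b hab
      exact congrArg Prod.fst hab
    have hsum_le : ∑' v : Fin d → ℤ, ENNReal.ofReal (f v ^ 2) ≤
        ∑' p : (Fin d → ℤ) × (Fin d → ℤ),
          if G.Adj p.1 p.2 then ENNReal.ofReal ((u p.1 - u p.2) ^ 2 / 1) else 0 := by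
      have h1 := ENNReal.tsum_comp_le_tsum_of_injective hinj
        (fun p : (Fin d → ℤ) × (Fin d → ℤ) =>
          if G.Adj p.1 p.2 then ENNReal.ofReal ((u p.1 - u p.2) ^ 2 / 1) else 0)
      refine le_trans (le_of_eq (tsum_congr fun v => ?_)) h1
      simp only [if_pos (hadj v), div_one]
      congr 1
      simp only [hfdef]
      ring
    have hne : ∑' v : Fin d → ℤ, ENNReal.ofReal (f v ^ 2) ≠ ⊤ := ne_top_of_le_ne_top hT hsum_le
    have hsq : Summable (fun v => f v ^ 2) := by
      have h2 := ENNReal.summable_toReal hne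
      exact h2.congr fun v => ENNReal.toReal_ofReal (sq_nonneg _)
    have hfh : ∀ v, ∑ w ∈ G.neighborFinset v, (f v - f w) = 0 := by
      intro v
      have h1 : ∑ w ∈ G.neighborFinset v, (u (v + e) - u (w + e)) = 0 := by
        have h2 := hh (v + e)
        rw [grid_nbhd_translate v e, Finset.sum_map] at h2
        simpa [addRightEmbedding_apply] using h2
      have h3 := hh v
      have h4 : ∑ w ∈ G.neighborFinset v, (f v - f w)
          = ∑ w ∈ G.neighborFinset v, ((u (v + e) - u (w + e)) - (u v - u w)) :=
        Finset.sum_congr rfl fun w _ => by simp only [hfdef]; ring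
      rw [h4, Finset.sum_sub_distrib, h1, h3, sub_zero]
    have hadjconst := grid_l2_adj_const hfh hsq
    have hstep : ∀ (v : Fin d → ℤ) (i' : Fin d), f (v + Pi.single i' 1) = f v :=
      fun v i' => (hadjconst v _ (grid_adj_single v i' (by norm_num))).symm
    have hconstf : ∀ v w, f v = f w := grid_const_of_step hstep
    have hf0 : f v0 = 0 := by
      by_contra hne0
      have hsq' : Summable (fun _ : Fin d → ℤ => f v0 ^ 2) :=
        hsq.congr fun v => by rw [hconstf v v0]
      have ht1 := hsq'.tendsto_cofinite_zero
      have ht2 : Tendsto (fun _ : Fin d → ℤ => f v0 ^ 2) cofinite (nhds (f v0 ^ 2)) :=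
        tendsto_const_nhds
      have hz : f v0 ^ 2 = 0 := tendsto_nhds_unique ht2 ht1
      exact hne0 (pow_eq_zero_iff (n := 2) (by norm_num) |>.mp hz)
    have : u (v0 + e) - u v0 = 0 := hf0
    linarith
  exact fun v w => grid_const_of_step (fun v i => key v i) v w
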